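/- In the additive Gaussian channel y = ρx + w, conditional moments satisfy the recursion: for h₁,…,h_k ∈ ℝ^n, E[∏_{i=1}^k ⟨h_i,x⟩ | y = u] = ⟨h_k, E[x | y = u]⟩ · E[∏_{i=1}^{k−1} ⟨h_i,x⟩ | y = u] + (1/ρ) ∇_{h_k} ( E[∏_{i=1}^{k−1} ⟨h_i,x⟩ | y = u] ), where ∇_{h_k} is the directional derivative in u. -/

import Mathlib

open MeasureTheory Real
open scoped RealInnerProductSpace ENNReal

noncomputable def stdGaussian (n : ℕ) : Measure (EuclideanSpace ℝ (Fin n)) :=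
  volume.withDensity
    (fun w => ENNReal.ofReal ((2 * π) ^ (-(n : ℝ) / 2) * Real.exp (-‖w‖ ^ 2 / 2)))

noncomputable def lik (n : ℕ) (ρ : ℝ) (μX : Measure (EuclideanSpace ℝ (Fin n)))
    (u : EuclideanSpace ℝ (Fin n)) : ℝ :=
  ∫ x, Real.exp (ρ * ⟪u, x⟫ - ρ ^ 2 / 2 * ‖x‖ ^ 2) ∂μX

noncomputable def postExp (n : ℕ) (ρ : ℝ) (μX : Measure (EuclideanSpace ℝ (Fin n)))
    (F : EuclideanSpace ℝ (Fin n) → ℝ) (u : EuclideanSpace ℝ (Fin n)) : ℝ :=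
  (lik n ρ μX u)⁻¹ * ∫ x, Real.exp (ρ * ⟪u, x⟫ - ρ ^ 2 / 2 * ‖x‖ ^ 2) * F x ∂μX

noncomputable def postMean (n : ℕ) (ρ : ℝ) (μX : Measure (EuclideanSpace ℝ (Fin n)))
    (u : EuclideanSpace ℝ (Fin n)) : EuclideanSpace ℝ (Fin n) :=
  (lik n ρ μX u)⁻¹ • ∫ x, Real.exp (ρ * ⟪u, x⟫ - ρ ^ 2 / 2 * ‖x‖ ^ 2) • x ∂μX

section aux
variable {n : ℕ}

local notation "E" => EuclideanSpace ℝ (Fin n)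

noncomputable def phifn (ρ : ℝ) (u x : E) : ℝ :=
  Real.exp (ρ * ⟪u, x⟫ - ρ ^ 2 / 2 * ‖x‖ ^ 2)

lemma quad_bound {ρ : ℝ} (hρ : 0 < ρ) (r : ℝ) (m : ℕ) (t : ℝ) (ht : 0 ≤ t) :
    t ^ m * Real.exp (r * t - ρ ^ 2 / 2 * t ^ 2) ≤ Real.exp ((|r| + m) ^ 2 / (2 * ρ ^ 2)) := by
  have h1 : t ^ m ≤ Real.exp (m * t) := by
    calc t ^ m ≤ (Real.exp t) ^ m :=
          pow_le_pow_left₀ ht (by linarith [Real.add_one_le_exp t]) m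
    _ = Real.exp (m * t) := by rw [← Real.exp_nat_mul, mul_comm]
  calc t ^ m * Real.exp (r * t - ρ^2/2*t^2)
      ≤ Real.exp (m*t) * Real.exp (r*t - ρ^2/2*t^2) :=
        mul_le_mul_of_nonneg_right h1 (Real.exp_nonneg _)
    _ = Real.exp (m*t + (r*t - ρ^2/2*t^2)) := (Real.exp_add _ _).symm
    _ ≤ Real.exp ((|r|+m)^2/(2*ρ^2)) := by
        apply Real.exp_le_exp.mpr
        have hr : r * t ≤ |r| * t := mul_le_mul_of_nonneg_right (le_abs_self r) ht
        have hρ2 : 0 < ρ^2 := by positivity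
        rw [le_div_iff₀ (by positivity : (0:ℝ) < 2 * ρ ^ 2)]
        nlinarith [sq_nonneg (ρ^2 * t - (|r| + (m:ℝ)))]

lemma phifn_bound {ρ : ℝ} (hρ : 0 < ρ) {R : ℝ} {u : E} (hu : ‖u‖ ≤ R) (x : E) :
    phifn ρ u x ≤ Real.exp (ρ * R * ‖x‖ - ρ ^ 2 / 2 * ‖x‖ ^ 2) := by
  apply Real.exp_le_exp.mpr
  have h1 : ⟪u, x⟫ ≤ ‖u‖ * ‖x‖ := real_inner_le_norm u x
  have h2 : ‖u‖ * ‖x‖ ≤ R * ‖x‖ := mul_le_mul_of_nonneg_right hu (norm_nonneg x)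
  nlinarith [hρ.le]

lemma phifn_poly_bound {ρ : ℝ} (hρ : 0 < ρ) {R c : ℝ} (hc : 0 ≤ c) {m : ℕ}
    {F : E → ℝ} (hF : ∀ x, |F x| ≤ c * ‖x‖ ^ m) {u : E} (hu : ‖u‖ ≤ R) (x : E) :
    |phifn ρ u x * F x| ≤ c * Real.exp ((|ρ * R| + m) ^ 2 / (2 * ρ ^ 2)) := by
  have hp : 0 ≤ phifn ρ u x := Real.exp_nonneg _
  calc |phifn ρ u x * F x| = phifn ρ u x * |F x| := by
        rw [abs_mul, abs_of_nonneg hp]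
    _ ≤ Real.exp (ρ * R * ‖x‖ - ρ^2/2*‖x‖^2) * (c * ‖x‖^m) := by
        apply mul_le_mul (phifn_bound hρ hu x) (hF x) (abs_nonneg _) (Real.exp_nonneg _)
    _ = c * (‖x‖^m * Real.exp ((ρ*R) * ‖x‖ - ρ^2/2*‖x‖^2)) := by ring
    _ ≤ c * Real.exp ((|ρ*R| + m)^2/(2*ρ^2)) := by
        exact mul_le_mul_of_nonneg_left (quad_bound hρ (ρ*R) m ‖x‖ (norm_nonneg x)) hc

lemma phifn_continuous (ρ : ℝ) (x : E) : Continuous fun u : E => phifn ρ u x :=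
  Real.continuous_exp.comp
    (((continuous_const.mul ((continuous_id.inner continuous_const))).sub continuous_const))

lemma phifn_continuous_x (ρ : ℝ) (u : E) : Continuous fun x : E => phifn ρ u x :=
  Real.continuous_exp.comp
    ((continuous_const.mul ((continuous_const.inner continuous_id))).sub
      (continuous_const.mul (continuous_norm.pow 2)))

lemma phifn_nonneg (ρ : ℝ) (u x : E) : 0 ≤ phifn ρ u x := Real.exp_nonneg _

lemma integrable_phifn_mul {ρ : ℝ} (hρ : 0 < ρ) (μX : Measure E) [IsProbabilityMeasure μX]
    {c : ℝ} (hc : 0 ≤ c) {m : ℕ} {F : E → ℝ} (hFc : Continuous F)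
    (hF : ∀ x, |F x| ≤ c * ‖x‖ ^ m) (u : E) :
    Integrable (fun x => phifn ρ u x * F x) μX := by
  refine Integrable.mono' (integrable_const (c * Real.exp ((|ρ * ‖u‖| + m) ^ 2 / (2 * ρ ^ 2))))
    (((phifn_continuous_x ρ u).mul hFc).aestronglyMeasurable) ?_
  exact Filter.Eventually.of_forall fun x => phifn_poly_bound hρ hc hF le_rfl x

lemma integrable_phifn_smul {ρ : ℝ} (hρ : 0 < ρ) (μX : Measure E) [IsProbabilityMeasure μX]
    (u : E) : Integrable (fun x => phifn ρ u x • x) μX := by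
  refine Integrable.mono'
    (integrable_const ((1:ℝ) * Real.exp ((|ρ * ‖u‖| + (1:ℕ)) ^ 2 / (2 * ρ ^ 2))))
    (((phifn_continuous_x ρ u).smul continuous_id).aestronglyMeasurable) ?_
  refine Filter.Eventually.of_forall fun x => ?_
  have hb := phifn_poly_bound hρ (c := 1) (m := 1) zero_le_one (F := fun x : E => ‖x‖)
    (fun x => by rw [abs_of_nonneg (norm_nonneg x), pow_one, one_mul]) (le_refl ‖u‖) x
  have h1 : ‖phifn ρ u x • x‖ = |phifn ρ u x * ‖x‖| := by
    rw [norm_smul, Real.norm_eq_abs, abs_mul, abs_of_nonneg (norm_nonneg x)]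
  rw [h1]
  exact hb

lemma hasFDerivAt_phifn (ρ : ℝ) (x u : E) (F : E → ℝ) :
    HasFDerivAt (fun u : E => phifn ρ u x * F x)
      (F x • (phifn ρ u x • (ρ • (innerSL ℝ x : E →L[ℝ] ℝ)))) u := by
  have h0 : HasFDerivAt (fun u : E => ρ * ⟪u, x⟫ - ρ ^ 2 / 2 * ‖x‖ ^ 2)
      (ρ • (innerSL ℝ x : E →L[ℝ] ℝ)) u := by
    have h2 := (((innerSL ℝ x).hasFDerivAt (x := u)).const_mul ρ).sub_const
      (ρ ^ 2 / 2 * ‖x‖ ^ 2)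
    have he : (fun u : E => ρ * ⟪u, x⟫ - ρ ^ 2 / 2 * ‖x‖ ^ 2)
        = fun u : E => ρ * (innerSL ℝ x u) - ρ ^ 2 / 2 * ‖x‖ ^ 2 := by
      funext v; rw [innerSL_apply_apply, real_inner_comm]
    rw [he]
    exact h2
  exact h0.exp.mul_const (F x)

set_option synthInstance.maxHeartbeats 1000000 in
lemma derivCLM_bound {ρ : ℝ} (hρ : 0 < ρ) {c : ℝ} (hc : 0 ≤ c) {m : ℕ} {F : E → ℝ}
    (hF : ∀ x, |F x| ≤ c * ‖x‖ ^ m) {R : ℝ} {u : E} (hu : ‖u‖ ≤ R) (x : E) :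
    ‖F x • (phifn ρ u x • (ρ • (innerSL ℝ x : E →L[ℝ] ℝ)))‖
      ≤ ρ * (c * Real.exp ((|ρ * R| + (m + 1 : ℕ)) ^ 2 / (2 * ρ ^ 2))) := by
  have hp : 0 ≤ phifn ρ u x := phifn_nonneg ρ u x
  have hb := phifn_poly_bound hρ (c := c) (m := m + 1)
    (F := fun x : E => F x * ‖x‖) hc
    (fun x => by
      rw [abs_mul, abs_of_nonneg (norm_nonneg x), pow_succ, ← mul_assoc]
      exact mul_le_mul_of_nonneg_right (hF x) (norm_nonneg x))
    hu x
  have key : ‖F x • (phifn ρ u x • (ρ • (innerSL ℝ x : E →L[ℝ] ℝ)))‖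
      = |F x| * (phifn ρ u x * (ρ * ‖x‖)) := by
    rw [norm_smul (β := E →L[ℝ] ℝ) (F x), norm_smul (β := E →L[ℝ] ℝ) (phifn ρ u x),
      norm_smul (β := E →L[ℝ] ℝ) ρ, innerSL_apply_norm, Real.norm_eq_abs,
      Real.norm_eq_abs, Real.norm_eq_abs, abs_of_nonneg hp, abs_of_nonneg hρ.le]
  rw [key]
  have h2 : |F x| * (phifn ρ u x * (ρ * ‖x‖)) = ρ * |phifn ρ u x * (F x * ‖x‖)| := by
    rw [abs_mul, abs_of_nonneg hp, abs_mul, abs_of_nonneg (norm_nonneg x)]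
    ring
  rw [h2]
  exact mul_le_mul_of_nonneg_left hb hρ.le

lemma hasFDerivAt_integral_phifn {ρ : ℝ} (hρ : 0 < ρ) (μX : Measure E)
    [IsProbabilityMeasure μX] {c : ℝ} (hc : 0 ≤ c) {m : ℕ} {F : E → ℝ} (hFc : Continuous F)
    (hF : ∀ x, |F x| ≤ c * ‖x‖ ^ m) (u : E) :
    HasFDerivAt (fun u : E => ∫ x, phifn ρ u x * F x ∂μX)
      (∫ x, F x • (phifn ρ u x • (ρ • (innerSL ℝ x : E →L[ℝ] ℝ))) ∂μX) u := by
  have hmeasD : AEStronglyMeasurable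
      (fun x => F x • (phifn ρ u x • (ρ • (innerSL ℝ x : E →L[ℝ] ℝ)))) μX :=
    Continuous.aestronglyMeasurable
      (hFc.smul ((phifn_continuous_x ρ u).smul ((innerSL ℝ).continuous.const_smul ρ)))
  have h_bound : ∀ᵐ x ∂μX, ∀ u' ∈ Metric.ball u 1,
      ‖F x • (phifn ρ u' x • (ρ • (innerSL ℝ x : E →L[ℝ] ℝ)))‖
        ≤ ρ * (c * Real.exp ((|ρ * (‖u‖ + 1)| + (m + 1 : ℕ)) ^ 2 / (2 * ρ ^ 2))) := by
    refine Filter.Eventually.of_forall fun x u' hu' => ?_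
    have hu'n : ‖u'‖ ≤ ‖u‖ + 1 := by
      have h3 := mem_ball_iff_norm.mp hu'
      calc ‖u'‖ = ‖u + (u' - u)‖ := by rw [show u + (u' - u) = u' from by abel]
        _ ≤ ‖u‖ + ‖u' - u‖ := norm_add_le _ _
        _ ≤ ‖u‖ + 1 := by linarith
    exact derivCLM_bound hρ hc hF hu'n x
  exact hasFDerivAt_integral_of_dominated_of_fderiv_le (Metric.ball_mem_nhds u one_pos)
    (Filter.Eventually.of_forall fun u' =>
      (((phifn_continuous_x ρ u').mul hFc).aestronglyMeasurable))
    (integrable_phifn_mul hρ μX hc hFc hF u) hmeasD h_bound (integrable_const _)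
    (Filter.Eventually.of_forall fun x u' _ => hasFDerivAt_phifn ρ x u' F)

lemma integrable_derivCLM {ρ : ℝ} (hρ : 0 < ρ) (μX : Measure E) [IsProbabilityMeasure μX]
    {c : ℝ} (hc : 0 ≤ c) {m : ℕ} {F : E → ℝ} (hFc : Continuous F)
    (hF : ∀ x, |F x| ≤ c * ‖x‖ ^ m) (u : E) :
    Integrable (fun x => F x • (phifn ρ u x • (ρ • (innerSL ℝ x : E →L[ℝ] ℝ)))) μX := by
  refine Integrable.mono'
    (integrable_const (ρ * (c * Real.exp ((|ρ * ‖u‖| + (m + 1 : ℕ)) ^ 2 / (2 * ρ ^ 2)))))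
    (Continuous.aestronglyMeasurable
      (hFc.smul ((phifn_continuous_x ρ u).smul ((innerSL ℝ).continuous.const_smul ρ)))) ?_
  exact Filter.Eventually.of_forall fun x => derivCLM_bound hρ hc hF le_rfl x

lemma deriv_integral_apply {ρ : ℝ} (hρ : 0 < ρ) (μX : Measure E) [IsProbabilityMeasure μX]
    {c : ℝ} (hc : 0 ≤ c) {m : ℕ} {F : E → ℝ} (hFc : Continuous F)
    (hF : ∀ x, |F x| ≤ c * ‖x‖ ^ m) (u v : E) :
    (∫ x, F x • (phifn ρ u x • (ρ • (innerSL ℝ x : E →L[ℝ] ℝ))) ∂μX) v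
      = ρ * ∫ x, phifn ρ u x * (F x * ⟪v, x⟫) ∂μX := by
  rw [ContinuousLinearMap.integral_apply (integrable_derivCLM hρ μX hc hFc hF u)]
  rw [← integral_const_mul]
  congr 1
  funext x
  simp only [ContinuousLinearMap.smul_apply, innerSL_apply_apply, smul_eq_mul]
  rw [real_inner_comm]
  ring


end aux

/-- recursion for conditional moments. -/
theorem posterior_moment_recursion (n : ℕ) (ρ : ℝ) (hρ : 0 < ρ)
    (μX : Measure (EuclideanSpace ℝ (Fin n))) [IsProbabilityMeasure μX]
    (hexp : ∀ (α : ℝ) (h : EuclideanSpace ℝ (Fin n)),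
      Integrable (fun x => Real.exp (α * ⟪x, h⟫)) μX)
    (hpos : ∀ u, 0 < lik n ρ μX u)
    (k : ℕ) (h : ℕ → EuclideanSpace ℝ (Fin n)) (u : EuclideanSpace ℝ (Fin n)) :
    postExp n ρ μX (fun x => ∏ i ∈ Finset.range (k + 1), ⟪h i, x⟫) u
      = ⟪h k, postMean n ρ μX u⟫
          * postExp n ρ μX (fun x => ∏ i ∈ Finset.range k, ⟪h i, x⟫) u
        + ρ⁻¹ * fderiv ℝ (postExp n ρ μX (fun x => ∏ i ∈ Finset.range k, ⟪h i, x⟫)) u (h k) := by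
  classical
  set P : EuclideanSpace ℝ (Fin n) → ℝ := fun x => ∏ i ∈ Finset.range k, ⟪h i, x⟫ with hP
  set cP : ℝ := ∏ i ∈ Finset.range k, ‖h i‖ with hcPdef
  have hcP : 0 ≤ cP := Finset.prod_nonneg fun i _ => norm_nonneg _
  have hPc : Continuous P := by
    apply continuous_finset_prod
    intro i _
    exact continuous_const.inner continuous_id
  have hPb : ∀ x, |P x| ≤ cP * ‖x‖ ^ k := by
    intro x
    rw [hP]
    calc |∏ i ∈ Finset.range k, ⟪h i, x⟫| = ∏ i ∈ Finset.range k, |⟪h i, x⟫| :=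
          Finset.abs_prod _ _
      _ ≤ ∏ i ∈ Finset.range k, (‖h i‖ * ‖x‖) :=
          Finset.prod_le_prod (fun i _ => abs_nonneg _)
            (fun i _ => abs_real_inner_le_norm _ _)
      _ = cP * ‖x‖ ^ k := by
          rw [Finset.prod_mul_distrib, Finset.prod_const, Finset.card_range, hcPdef]
  -- derivative of the numerator
  have hG := hasFDerivAt_integral_phifn hρ μX hcP hPc hPb u
  -- derivative of lik
  have h1b : ∀ x : EuclideanSpace ℝ (Fin n), |(fun _ : EuclideanSpace ℝ (Fin n) => (1:ℝ)) x| ≤ 1 * ‖x‖ ^ 0 := fun x => by simp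
  have hLik0 := hasFDerivAt_integral_phifn hρ μX zero_le_one continuous_const h1b u
  have hlik_eq : lik n ρ μX = fun u => ∫ x, phifn ρ u x * (fun _ : EuclideanSpace ℝ (Fin n) => (1:ℝ)) x ∂μX := by
    funext u'
    simp only [lik, phifn, mul_one]
  have hLik : HasFDerivAt (lik n ρ μX)
      (∫ x, (fun _ : EuclideanSpace ℝ (Fin n) => (1:ℝ)) x • (phifn ρ u x • (ρ • (innerSL ℝ x : EuclideanSpace ℝ (Fin n) →L[ℝ] ℝ))) ∂μX)
      u := by rw [hlik_eq]; exact hLik0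
  set L' := ∫ x, (fun _ : EuclideanSpace ℝ (Fin n) => (1:ℝ)) x • (phifn ρ u x • (ρ • (innerSL ℝ x : EuclideanSpace ℝ (Fin n) →L[ℝ] ℝ))) ∂μX
    with hL'def
  set G' := ∫ x, P x • (phifn ρ u x • (ρ • (innerSL ℝ x : EuclideanSpace ℝ (Fin n) →L[ℝ] ℝ))) ∂μX with hG'def
  set ℓ : ℝ := lik n ρ μX u with hldef
  have hlne : ℓ ≠ 0 := (hpos u).ne'
  -- derivative of (lik)⁻¹
  have hInv0 := (hasFDerivAt_inv (𝕜 := ℝ) hlne).comp u hLik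
  have hInv : HasFDerivAt (fun u => (lik n ρ μX u)⁻¹)
      ((ContinuousLinearMap.smulRight (1 : ℝ →L[ℝ] ℝ) (-(ℓ ^ 2)⁻¹)).comp L') u := hInv0
  -- derivative of postExp on P
  have hMul := hInv.mul hG
  have hpe_eq : postExp n ρ μX P
      = fun u => (lik n ρ μX u)⁻¹ * ∫ x, phifn ρ u x * P x ∂μX := rfl
  have hfd : fderiv ℝ (postExp n ρ μX P) u
      = ℓ⁻¹ • G' + (∫ x, phifn ρ u x * P x ∂μX)
          • ((ContinuousLinearMap.smulRight (1 : ℝ →L[ℝ] ℝ) (-(ℓ ^ 2)⁻¹)).comp L') := by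
    rw [hpe_eq]
    exact hMul.fderiv
  set g : ℝ := ∫ x, phifn ρ u x * P x ∂μX with hgdef
  set A : ℝ := ∫ x, phifn ρ u x * (P x * ⟪h k, x⟫) ∂μX with hAdef
  set B : ℝ := ∫ x, phifn ρ u x * ⟪h k, x⟫ ∂μX with hBdef
  -- evaluate derivatives
  have hGapp : G' (h k) = ρ * A := by
    rw [hG'def]
    exact deriv_integral_apply hρ μX hcP hPc hPb u (h k)
  have hLapp : L' (h k) = ρ * B := by
    rw [hL'def, deriv_integral_apply hρ μX zero_le_one continuous_const h1b u (h k)]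
    rw [hBdef]
    congr 1
    apply integral_congr_ae
    exact Filter.Eventually.of_forall fun x => by simp only [one_mul]
  have hfdapp : fderiv ℝ (postExp n ρ μX P) u (h k)
      = ℓ⁻¹ * (ρ * A) + g * ((ρ * B) * (-(ℓ ^ 2)⁻¹)) := by
    rw [hfd]
    rw [ContinuousLinearMap.add_apply, ContinuousLinearMap.smul_apply,
      ContinuousLinearMap.smul_apply, ContinuousLinearMap.comp_apply,
      ContinuousLinearMap.smulRight_apply, ContinuousLinearMap.one_apply, hGapp, hLapp]
    simp only [smul_eq_mul, ← hgdef]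
  -- posterior mean inner product
  have hpm : ⟪h k, postMean n ρ μX u⟫ = ℓ⁻¹ * B := by
    have hint : Integrable (fun x => phifn ρ u x • x) μX := integrable_phifn_smul hρ μX u
    have := integral_inner (𝕜 := ℝ) hint (h k)
    rw [postMean, real_inner_smul_right, ← hldef]
    congr 1
    rw [hBdef]
    rw [show (∫ x, Real.exp (ρ * ⟪u, x⟫ - ρ ^ 2 / 2 * ‖x‖ ^ 2) • x ∂μX)
        = ∫ x, phifn ρ u x • x ∂μX from rfl, ← this]
    apply integral_congr_ae
    exact Filter.Eventually.of_forall fun x => by simp only [real_inner_smul_right]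
  -- LHS
  have hlhs : postExp n ρ μX (fun x => ∏ i ∈ Finset.range (k + 1), ⟪h i, x⟫) u = ℓ⁻¹ * A := by
    rw [postExp, ← hldef]
    congr 1
    rw [hAdef]
    apply integral_congr_ae
    refine Filter.Eventually.of_forall fun x => ?_
    simp only [Finset.prod_range_succ, phifn, hP]
  have hrhs2 : postExp n ρ μX P u = ℓ⁻¹ * g := rfl
  rw [hlhs, hpm, hrhs2, hfdapp]
  field_simp
  ring
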